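/- arXiv:1601.05909 — 10 statements merged into one kernel-verified Lean document; each statement's English description precedes it below -/
import Mathlib

section
/- If every temporal edge of a temporal graph has traversal time λ ≥ 1, then the transformed graph G of the temporal graph is a directed acyclic graph: there is no nonempty directed cycle in G (equivalently, for distinct vertices x, y of G it is impossible that both x →_G y and y →_G x). -/
/-- A copy of an original vertex: `inn v t` is the vertex `in(v, t)` and
`out v t` is the vertex `out(v, t)` of the transformed graph. -/
inductive Copy (V : Type*) where
  | inn : V → ℕ → Copy V
  | out : V → ℕ → Copy V

/-- The original vertex of which a vertex of the transformed graph is a copy. -/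
def Copy.base {V : Type*} : Copy V → V
  | .inn v _ => v
  | .out v _ => v

/-- The time stamp of a vertex of the transformed graph. -/
def Copy.time {V : Type*} : Copy V → ℕ
  | .inn _ t => t
  | .out _ t => t

/-- `T_in(v)`: the set of arrival times of in-edges of `v`. -/
def Tin {V : Type*} (E : Finset (V × V × ℕ × ℕ)) (v : V) : Set ℕ :=
  {s | ∃ u t l, (u, v, t, l) ∈ E ∧ s = t + l}

/-- `T_out(v)`: the set of starting times of out-edges of `v`. -/
def Tout {V : Type*} (E : Finset (V × V × ℕ × ℕ)) (v : V) : Set ℕ :=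
  {t | ∃ u l, (v, u, t, l) ∈ E}

/-- The edge relation of the transformed graph `G` of the temporal graph with
temporal edge set `E`. -/
inductive GEdge {V : Type*} (E : Finset (V × V × ℕ × ℕ)) : Copy V → Copy V → Prop where
  | in_in {v : V} {t t' : ℕ} : t ∈ Tin E v → t' ∈ Tin E v → t < t' →
      (∀ s ∈ Tin E v, s ≤ t ∨ t' ≤ s) → GEdge E (.inn v t) (.inn v t')
  | out_out {v : V} {t t' : ℕ} : t ∈ Tout E v → t' ∈ Tout E v → t < t' →
      (∀ s ∈ Tout E v, s ≤ t ∨ t' ≤ s) → GEdge E (.out v t) (.out v t')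
  | in_out {v : V} {t s : ℕ} : t ∈ Tin E v → s ∈ Tout E v → t ≤ s →
      (∀ s' ∈ Tout E v, t ≤ s' → s ≤ s') →
      (∀ t' ∈ Tin E v, t' ≤ s → t' ≤ t) →
      GEdge E (.inn v t) (.out v s)
  | cross {u v : V} {t l : ℕ} : (u, v, t, l) ∈ E → GEdge E (.out u t) (.inn v (t + l))

/-- Membership in the vertex set of the transformed graph. -/
def IsVert {V : Type*} (E : Finset (V × V × ℕ × ℕ)) : Copy V → Prop
  | .inn v t => t ∈ Tin E v
  | .out v t => t ∈ Tout E v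

/-- Measure strictly increasing along edges. -/
def Gmeasure {V : Type*} : Copy V → ℕ
  | .inn _ t => 2 * t
  | .out _ t => 2 * t + 1

theorem transformed_graph_is_DAG {V : Type*} (E : Finset (V × V × ℕ × ℕ))
    (hl : ∀ u v t l, (u, v, t, l) ∈ E → 1 ≤ l) :
    ∀ x : Copy V, ¬ Relation.TransGen (GEdge E) x x := by
  have key : ∀ x y : Copy V, GEdge E x y → Gmeasure x < Gmeasure y := by
    intro x y h
    cases h with
    | in_in _ _ hlt _ => simpa [Gmeasure] using hlt
    | out_out _ _ hlt _ => simpa [Gmeasure] using hlt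
    | in_out _ _ hle _ _ => simp [Gmeasure]; omega
    | cross hmem =>
        have := hl _ _ _ _ hmem
        simp [Gmeasure]; omega
  have gen : ∀ x y : Copy V, Relation.TransGen (GEdge E) x y →
      Gmeasure x < Gmeasure y := by
    intro x y hxy
    induction hxy with
    | single h => exact key _ _ h
    | tail _ h ih => exact lt_trans ih (key _ _ h)
  intro x hx
  exact lt_irrefl _ (gen x x hx)
end

section
/- Let G be the transformed graph of a temporal graph and let v ∈ 𝒱. Then: (a) for all t₁, t₂ ∈ T_in(v), in(v, t₁) →_G in(v, t₂) if and only if t₁ ≤ t₂; (b) for all t₁, t₂ ∈ T_out(v), out(v, t₁) →_G out(v, t₂) if and only if t₁ ≤ t₂; (c) for all t₁ ∈ T_in(v) and t₂ ∈ T_out(v), in(v, t₁) →_G out(v, t₂) if and only if t₁ ≤ t₂. -/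
lemma GEdge.time_mono {V : Type*} {E : Finset (V × V × ℕ × ℕ)} {a b : Copy V}
    (h : GEdge E a b) : a.time ≤ b.time := by
  cases h <;> simp [Copy.time] <;> omega

lemma reach_time_mono {V : Type*} {E : Finset (V × V × ℕ × ℕ)} {a b : Copy V}
    (h : Relation.ReflTransGen (GEdge E) a b) : a.time ≤ b.time := by
  induction h with
  | refl => exact le_rfl
  | tail _ e ih => exact ih.trans e.time_mono

open Classical in
lemma chain_aux {V : Type*} {E : Finset (V × V × ℕ × ℕ)} (S : Set ℕ) (f : ℕ → Copy V)
    (hf : ∀ a b, a ∈ S → b ∈ S → a < b → (∀ s ∈ S, s ≤ a ∨ b ≤ s) → GEdge E (f a) (f b)) :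
    ∀ n t₁ t₂, t₂ - t₁ ≤ n → t₁ ∈ S → t₂ ∈ S → t₁ ≤ t₂ →
      Relation.ReflTransGen (GEdge E) (f t₁) (f t₂) := by
  intro n
  induction n with
  | zero =>
    intro t₁ t₂ h _ _ hle
    have : t₁ = t₂ := by omega
    subst this; exact .refl
  | succ n ih =>
    intro t₁ t₂ h h1 h2 hle
    rcases eq_or_lt_of_le hle with rfl | hlt
    · exact .refl
    have hP : ∃ k, t₁ < k ∧ k ∈ S := ⟨t₂, hlt, h2⟩
    set s₀ := Nat.find hP with hs₀
    obtain ⟨hs₀lt, hs₀S⟩ := Nat.find_spec hP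
    have hs₀le : s₀ ≤ t₂ := Nat.find_min' hP ⟨hlt, h2⟩
    have hedge : GEdge E (f t₁) (f s₀) := by
      refine hf _ _ h1 hs₀S hs₀lt ?_
      intro s hs
      rcases le_or_gt s t₁ with h' | h'
      · exact Or.inl h'
      · exact Or.inr (Nat.find_min' hP ⟨h', hs⟩)
    exact Relation.ReflTransGen.head hedge (ih s₀ t₂ (by omega) hs₀S h2 hs₀le)

theorem reach_within_copies_iff_le {V : Type*} (E : Finset (V × V × ℕ × ℕ)) (v : V) :
    (∀ t₁ ∈ Tin E v, ∀ t₂ ∈ Tin E v,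
      (Relation.ReflTransGen (GEdge E) (.inn v t₁) (.inn v t₂) ↔ t₁ ≤ t₂)) ∧
    (∀ t₁ ∈ Tout E v, ∀ t₂ ∈ Tout E v,
      (Relation.ReflTransGen (GEdge E) (.out v t₁) (.out v t₂) ↔ t₁ ≤ t₂)) ∧
    (∀ t₁ ∈ Tin E v, ∀ t₂ ∈ Tout E v,
      (Relation.ReflTransGen (GEdge E) (.inn v t₁) (.out v t₂) ↔ t₁ ≤ t₂)) := by
  classical
  have chin : ∀ t₁ ∈ Tin E v, ∀ t₂ ∈ Tin E v, t₁ ≤ t₂ →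
      Relation.ReflTransGen (GEdge E) (Copy.inn v t₁) (Copy.inn v t₂) := by
    intro t₁ h1 t₂ h2 hle
    exact chain_aux (Tin E v) (Copy.inn v)
      (fun a b ha hb hab hgap => GEdge.in_in ha hb hab hgap)
      (t₂ - t₁) t₁ t₂ le_rfl h1 h2 hle
  have chout : ∀ t₁ ∈ Tout E v, ∀ t₂ ∈ Tout E v, t₁ ≤ t₂ →
      Relation.ReflTransGen (GEdge E) (Copy.out v t₁) (Copy.out v t₂) := by
    intro t₁ h1 t₂ h2 hle
    exact chain_aux (Tout E v) (Copy.out v)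
      (fun a b ha hb hab hgap => GEdge.out_out ha hb hab hgap)
      (t₂ - t₁) t₁ t₂ le_rfl h1 h2 hle
  refine ⟨fun t₁ h1 t₂ h2 => ⟨fun h => reach_time_mono h, chin t₁ h1 t₂ h2⟩,
    fun t₁ h1 t₂ h2 => ⟨fun h => reach_time_mono h, chout t₁ h1 t₂ h2⟩,
    fun t₁ h1 t₂ h2 => ⟨fun h => reach_time_mono h, ?_⟩⟩
  intro hle
  -- greatest element of Tin ≤ t₂
  have hQ : ∃ k, t₂ - k ∈ Tin E v := ⟨t₂ - t₁, by rwa [Nat.sub_sub_self hle]⟩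
  set k₀ := Nat.find hQ with hk₀
  set t := t₂ - k₀ with ht
  have htTin : t ∈ Tin E v := Nat.find_spec hQ
  have ht₁t : t₁ ≤ t := by
    have : k₀ ≤ t₂ - t₁ := Nat.find_min' hQ (by rwa [Nat.sub_sub_self hle])
    omega
  have htle : t ≤ t₂ := by omega
  have htmax : ∀ t' ∈ Tin E v, t' ≤ t₂ → t' ≤ t := by
    intro t' ht' hle'
    have : k₀ ≤ t₂ - t' := Nat.find_min' hQ (by rwa [Nat.sub_sub_self hle'])
    omega
  -- least element of Tout ≥ t
  have hR : ∃ s, s ∈ Tout E v ∧ t ≤ s := ⟨t₂, h2, htle⟩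
  set s := Nat.find hR with hs
  obtain ⟨hsTout, hts⟩ := Nat.find_spec hR
  have hst₂ : s ≤ t₂ := Nat.find_min' hR ⟨h2, htle⟩
  have hmid : GEdge E (Copy.inn v t) (Copy.out v s) := by
    refine GEdge.in_out htTin hsTout hts ?_ ?_
    · intro s' hs' hts'; exact Nat.find_min' hR ⟨hs', hts'⟩
    · intro t' ht' hle'; exact htmax t' ht' (hle'.trans hst₂)
  exact ((chin t₁ h1 t htTin ht₁t).tail hmid).trans (chout s hsTout t₂ h2 hst₂)
end

section
/- Let G be a directed graph on a finite vertex set with a chain cover ℂ (with injective rank function). For any vertices u and v: if there exist codes (x, y₁) ∈ RFcode(u) and (x, y₂) ∈ RLcode(v) with the same first component x and y₁ ≤ y₂, then u → v. -/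
/-- A chain cover of the directed graph on `V` with edge relation `step`:
a finite family of chains (nonempty lists of pairwise-distinct vertices,
each vertex reaching the next) such that every vertex lies in exactly one
chain, together with an injective rank function on the chains. -/
structure ChainCover {V : Type*} (step : V → V → Prop) where
  chains : Finset (List V)
  ne : ∀ C ∈ chains, C ≠ []
  nodup : ∀ C ∈ chains, C.Nodup
  chain : ∀ C ∈ chains, C.Chain' (Relation.ReflTransGen step)
  cover : ∀ v : V, ∃! C, C ∈ chains ∧ v ∈ C
  rank : List V → ℕ
  rank_inj : ∀ C₁ ∈ chains, ∀ C₂ ∈ chains, rank C₁ = rank C₂ → C₁ = C₂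

/-- `RFcode(v)`: the set of chain codes `(rank(C), position of first_v(C))`
of the first vertex reachable from `v` in each chain reachable from `v`. -/
def RFcode {V : Type*} [DecidableEq V] (step : V → V → Prop) (cc : ChainCover step)
    (v : V) : Set (ℕ × ℕ) :=
  {c | ∃ C ∈ cc.chains, ∃ w ∈ C, Relation.ReflTransGen step v w ∧
    (∀ w' ∈ C, Relation.ReflTransGen step v w' → C.idxOf w ≤ C.idxOf w') ∧
    c = (cc.rank C, C.idxOf w)}

/-- `RLcode(v)`: the set of chain codes `(rank(C), position of last_v(C))`
of the last vertex that can reach `v` in each chain that can reach `v`. -/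
def RLcode {V : Type*} [DecidableEq V] (step : V → V → Prop) (cc : ChainCover step)
    (v : V) : Set (ℕ × ℕ) :=
  {c | ∃ C ∈ cc.chains, ∃ w ∈ C, Relation.ReflTransGen step w v ∧
    (∀ w' ∈ C, Relation.ReflTransGen step w' v → C.idxOf w' ≤ C.idxOf w) ∧
    c = (cc.rank C, C.idxOf w)}

/-- `top_k(S)`: the codes of `S` whose first component is among the `k`
smallest first components occurring in `S` (all of `S` if it has at most `k`
elements). -/
def topk (k : ℕ) (S : Set (ℕ × ℕ)) : Set (ℕ × ℕ) :=
  {c ∈ S | ({c' ∈ S | c'.1 < c.1}).ncard < k}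

lemma chain'_reach {V : Type*} {step : V → V → Prop} {l : List V}
    (hc : l.Chain' (Relation.ReflTransGen step)) :
    ∀ j (hj : j < l.length) i (hij : i ≤ j),
      Relation.ReflTransGen step (l.get ⟨i, lt_of_le_of_lt hij hj⟩) (l.get ⟨j, hj⟩) := by
  intro j
  induction j with
  | zero =>
    intro hj i hi
    have : i = 0 := by omega
    subst this; exact Relation.ReflTransGen.refl
  | succ n ih =>
    intro hj i hi
    rcases Nat.lt_or_ge i (n+1) with h' | h'
    · have := ih (by omega) i (by omega)
      exact this.trans ((List.isChain_iff_getElem.mp hc) n (by omega))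
    · have : i = n + 1 := by omega
      subst this
      exact Relation.ReflTransGen.refl

theorem code_match_implies_reach {V : Type*} [Fintype V] [DecidableEq V]
    (step : V → V → Prop) (cc : ChainCover step) (u v : V) (x y₁ y₂ : ℕ)
    (h1 : (x, y₁) ∈ RFcode step cc u) (h2 : (x, y₂) ∈ RLcode step cc v)
    (h : y₁ ≤ y₂) :
    Relation.ReflTransGen step u v := by
  obtain ⟨C₁, hC₁, w₁, hw₁, huw₁, -, hcode₁⟩ := h1
  obtain ⟨C₂, hC₂, w₂, hw₂, hw₂v, -, hcode₂⟩ := h2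
  have hrank : cc.rank C₁ = cc.rank C₂ := by
    have e1 := congrArg Prod.fst hcode₁
    have e2 := congrArg Prod.fst hcode₂
    simp at e1 e2; omega
  have hCeq : C₁ = C₂ := cc.rank_inj C₁ hC₁ C₂ hC₂ hrank
  subst hCeq
  have hy1 : y₁ = C₁.idxOf w₁ := by
    have := congrArg Prod.snd hcode₁; simpa using this
  have hy2 : y₂ = C₁.idxOf w₂ := by
    have := congrArg Prod.snd hcode₂; simpa using this
  have hlt1 : C₁.idxOf w₁ < C₁.length := List.idxOf_lt_length_iff.mpr hw₁
  have hlt2 : C₁.idxOf w₂ < C₁.length := List.idxOf_lt_length_iff.mpr hw₂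
  have hle : C₁.idxOf w₁ ≤ C₁.idxOf w₂ := by omega
  have hreach := chain'_reach (cc.chain C₁ hC₁) (C₁.idxOf w₂) hlt2 (C₁.idxOf w₁) hle
  rw [List.idxOf_get hlt1] at hreach  -- adjust names below if needed
  have hg1 : C₁.get ⟨C₁.idxOf w₁, _⟩ = w₁ := List.idxOf_get hlt1
  have hg2 : C₁.get ⟨C₁.idxOf w₂, hlt2⟩ = w₂ := List.idxOf_get hlt2
  rw [hg2] at hreach
  exact (huw₁.trans hreach).trans hw₂v
end

section
/- Let G be a directed graph on a finite vertex set with a chain cover ℂ (with injective rank function), let k ≥ 1, and for every vertex w set L_out(w) = top_k(RFcode(w)). Let u, v be vertices. If either (1) there exists (x_r, y_r) ∈ L_out(v) such that no code in L_out(u) has first component x_r, and there exists (x_s, y_s) ∈ L_out(u) with x_s > x_r; or (2) there exist (x, y_r) ∈ L_out(v) and (x, y_w) ∈ L_out(u) with the same first component x and y_w > y_r; then u cannot reach v (¬(u → v)). -/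
lemma RFcode_finite {V : Type*} [DecidableEq V] (step : V → V → Prop)
    (cc : ChainCover step) (v : V) : (RFcode step cc v).Finite := by
  classical
  apply Set.Finite.subset (Finset.finite_toSet
    (cc.chains.biUnion (fun C => C.toFinset.image (fun w => (cc.rank C, C.idxOf w)))))
  rintro c ⟨C, hC, w, hw, -, -, rfl⟩
  simp only [Finset.coe_biUnion, Set.mem_iUnion, Finset.mem_coe, Finset.mem_image,
    List.mem_toFinset]
  exact ⟨C, hC, w, hw, rfl⟩

lemma RFcode_mono {V : Type*} [DecidableEq V] (step : V → V → Prop)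
    (cc : ChainCover step) {u v : V} (huv : Relation.ReflTransGen step u v)
    {x y : ℕ} (h : (x, y) ∈ RFcode step cc v) :
    ∃ y' ≤ y, (x, y') ∈ RFcode step cc u := by
  obtain ⟨C, hC, w, hw, hvw, hmin, hcode⟩ := h
  obtain ⟨hx, hy⟩ := Prod.mk.injEq .. ▸ hcode
  subst hx; subst hy
  set T : Set ℕ := {i | ∃ w' ∈ C, Relation.ReflTransGen step u w' ∧ C.idxOf w' = i} with hT
  have hne : T.Nonempty := ⟨C.idxOf w, w, hw, huv.trans hvw, rfl⟩
  obtain ⟨w0, hw0, hw0r, hw0i⟩ := Nat.sInf_mem hne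
  refine ⟨C.idxOf w0, ?_, C, hC, w0, hw0, hw0r, ?_, rfl⟩
  · rw [hw0i]; exact Nat.sInf_le ⟨w, hw, huv.trans hvw, rfl⟩
  · intro w' h1 h2
    rw [hw0i]; exact Nat.sInf_le ⟨w', h1, h2, rfl⟩

theorem out_label_prune_correct {V : Type*} [Fintype V] [DecidableEq V]
    (step : V → V → Prop) (cc : ChainCover step) (k : ℕ) (hk : 1 ≤ k) (u v : V)
    (h : (∃ xr yr, (xr, yr) ∈ topk k (RFcode step cc v) ∧
            (∀ y, (xr, y) ∉ topk k (RFcode step cc u)) ∧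
            ∃ xs ys, (xs, ys) ∈ topk k (RFcode step cc u) ∧ xr < xs) ∨
         (∃ x yr yw, (x, yr) ∈ topk k (RFcode step cc v) ∧
            (x, yw) ∈ topk k (RFcode step cc u) ∧ yr < yw)) :
    ¬ Relation.ReflTransGen step u v := by

  intro huv
  have hfin := RFcode_finite step cc u
  rcases h with ⟨xr, yr, hvr, hnot, xs, ys, hus, hlt⟩ | ⟨x, yr, yw, hvr, huw, hlt⟩
  · obtain ⟨hvr', -⟩ := hvr
    obtain ⟨y', -, hy'⟩ := RFcode_mono step cc huv hvr'
    have h1 : ¬ ({c' ∈ RFcode step cc u | c'.1 < xr}).ncard < k :=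
      fun hc => hnot y' ⟨hy', hc⟩
    obtain ⟨-, h2⟩ := hus
    have hsub : {c' ∈ RFcode step cc u | c'.1 < xr} ⊆ {c' ∈ RFcode step cc u | c'.1 < xs} :=
      fun c hc => ⟨hc.1, hc.2.trans hlt⟩
    exact h1 (lt_of_le_of_lt (Set.ncard_le_ncard hsub (hfin.subset (fun c hc => hc.1))) h2)
  · obtain ⟨hvr', -⟩ := hvr
    obtain ⟨huw', -⟩ := huw
    obtain ⟨C, hC, w, hw, hvw, -, hcode⟩ := hvr'
    obtain ⟨C', hC', w', hw', -, hmin, hcode'⟩ := huw'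
    obtain ⟨hx1, hy1⟩ := Prod.mk.injEq .. ▸ hcode
    obtain ⟨hx2, hy2⟩ := Prod.mk.injEq .. ▸ hcode'
    have hCC : C = C' := cc.rank_inj C hC C' hC' (hx1 ▸ hx2 ▸ rfl)
    subst hCC
    have := hmin w hw (huv.trans hvw)
    omega
end

section
/- Let G be a directed graph on a finite vertex set with a chain cover ℂ (with injective rank function), let k ≥ 1, and for every vertex w set L_in(w) = top_k(RLcode(w)). Let u, v be vertices. If either (1) there exists (x_r, y_r) ∈ L_in(u) such that no code in L_in(v) has first component x_r, and there exists (x_s, y_s) ∈ L_in(v) with x_s > x_r; or (2) there exist (x, y_r) ∈ L_in(u) and (x, y_w) ∈ L_in(v) with the same first component x and y_w < y_r; then u cannot reach v (¬(u → v)). -/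
lemma RLcode_finite {V : Type*} [DecidableEq V] (step : V → V → Prop)
    (cc : ChainCover step) (v : V) : (RLcode step cc v).Finite := by
  have hsub : RLcode step cc v ⊆
      ⋃ C ∈ (cc.chains : Set (List V)), (fun w => (cc.rank C, C.idxOf w)) '' {w | w ∈ C} := by
    rintro c ⟨C, hC, w, hw, _, _, rfl⟩
    exact Set.mem_biUnion hC ⟨w, hw, rfl⟩
  exact Set.Finite.subset
    (Set.Finite.biUnion cc.chains.finite_toSet fun C _ => (C.finite_toSet.image _)) hsub

lemma RLcode_unique {V : Type*} [DecidableEq V] {step : V → V → Prop}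
    {cc : ChainCover step} {v : V} {x y₁ y₂ : ℕ}
    (h₁ : (x, y₁) ∈ RLcode step cc v) (h₂ : (x, y₂) ∈ RLcode step cc v) : y₁ = y₂ := by
  obtain ⟨C₁, hC₁, w₁, hw₁, hr₁, hm₁, he₁⟩ := h₁
  obtain ⟨C₂, hC₂, w₂, hw₂, hr₂, hm₂, he₂⟩ := h₂
  have hx : cc.rank C₁ = cc.rank C₂ := by
    have := (Prod.mk.injEq _ _ _ _).mp he₁
    have := (Prod.mk.injEq _ _ _ _).mp he₂
    omega
  have hCC : C₁ = C₂ := cc.rank_inj _ hC₁ _ hC₂ hx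
  subst hCC
  obtain ⟨-, rfl⟩ := (Prod.mk.injEq _ _ _ _).mp he₁
  obtain ⟨-, rfl⟩ := (Prod.mk.injEq _ _ _ _).mp he₂
  exact le_antisymm (hm₂ _ hw₁ hr₁) (hm₁ _ hw₂ hr₂)

lemma RLcode_mono {V : Type*} [DecidableEq V] {step : V → V → Prop}
    {cc : ChainCover step} {u v : V} (huv : Relation.ReflTransGen step u v)
    {x y : ℕ} (h : (x, y) ∈ RLcode step cc u) :
    ∃ y', y ≤ y' ∧ (x, y') ∈ RLcode step cc v := by
  obtain ⟨C, hC, w, hw, hr, hm, he⟩ := h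
  obtain ⟨hx, hy⟩ := (Prod.mk.injEq _ _ _ _).mp he
  subst hx; subst hy
  set S : Set V := {w' | w' ∈ C ∧ Relation.ReflTransGen step w' v} with hS
  have hSfin : S.Finite := C.finite_toSet.subset fun a ha => ha.1
  have hSne : S.Nonempty := ⟨w, hw, hr.trans huv⟩
  obtain ⟨m, hmS, hmax⟩ := Set.exists_max_image S (C.idxOf ·) hSfin hSne
  exact ⟨C.idxOf m, hmax w ⟨hw, hr.trans huv⟩,
    C, hC, m, hmS.1, hmS.2, fun w' hw' hr' => hmax w' ⟨hw', hr'⟩, rfl⟩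

theorem in_label_prune_correct {V : Type*} [Fintype V] [DecidableEq V]
    (step : V → V → Prop) (cc : ChainCover step) (k : ℕ) (hk : 1 ≤ k) (u v : V)
    (h : (∃ xr yr, (xr, yr) ∈ topk k (RLcode step cc u) ∧
            (∀ y, (xr, y) ∉ topk k (RLcode step cc v)) ∧
            ∃ xs ys, (xs, ys) ∈ topk k (RLcode step cc v) ∧ xr < xs) ∨
         (∃ x yr yw, (x, yr) ∈ topk k (RLcode step cc u) ∧
            (x, yw) ∈ topk k (RLcode step cc v) ∧ yw < yr)) :
    ¬ Relation.ReflTransGen step u v := by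
  intro huv
  rcases h with ⟨xr, yr, hu, hnot, xs, ys, hs, hlt⟩ | ⟨x, yr, yw, hu, hv, hlt⟩
  · obtain ⟨y', hy', hmem⟩ := RLcode_mono huv hu.1
    have hnottop := hnot y'
    have hk' : k ≤ ({c' ∈ RLcode step cc v | c'.1 < xr}).ncard := by
      by_contra hcon
      exact hnottop ⟨hmem, show ({c' ∈ RLcode step cc v | c'.1 < xr}).ncard < k by omega⟩
    have hsub : {c' ∈ RLcode step cc v | c'.1 < xr} ∪ {(xr, y')} ⊆
        {c' ∈ RLcode step cc v | c'.1 < xs} := by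
      rintro c (⟨hc, hc'⟩ | hc)
      · exact ⟨hc, by omega⟩
      · rw [Set.mem_singleton_iff] at hc; subst hc; exact ⟨hmem, hlt⟩
    have hfin : ({c' ∈ RLcode step cc v | c'.1 < xs}).Finite :=
      (RLcode_finite step cc v).subset fun c hc => hc.1
    have hle := Set.ncard_le_ncard hsub hfin
    have hdisj : (xr, y') ∉ {c' ∈ RLcode step cc v | c'.1 < xr} := by
      rintro ⟨-, hlt'⟩; simp at hlt'
    rw [Set.union_singleton, Set.ncard_insert_of_notMem hdisj
      ((hfin.subset (fun c hc => hsub (Or.inl hc))))] at hle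
    have : ({c' ∈ RLcode step cc v | c'.1 < xs}).ncard < k := hs.2
    omega
  · obtain ⟨y', hy', hmem⟩ := RLcode_mono huv hu.1
    have := RLcode_unique hv.1 hmem
    omega
end

section
/- Let G be the transformed graph of a temporal graph in which every temporal edge has traversal time λ ≥ 1, and let G_new be the graph obtained from G by adding, for every v ∈ 𝒱, all edges out(v, t) → in(v, t') with t ∈ T_out(v), t' ∈ T_in(v), and t < t'. Then for any two distinct original vertices a ≠ b in 𝒱, any copy r of a, and any copy s of b: r →_G s if and only if r →_{G_new} s. -/
/-- The edge relation of `G_new`: all edges of `G` together with, for every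
original vertex `v`, the edges `out(v, t) → in(v, t')` for `t ∈ T_out(v)`,
`t' ∈ T_in(v)` and `t < t'`. -/
def GEdgeNew {V : Type*} (E : Finset (V × V × ℕ × ℕ)) (x y : Copy V) : Prop :=
  GEdge E x y ∨
    ∃ v t t', t ∈ Tout E v ∧ t' ∈ Tin E v ∧ t < t' ∧ x = Copy.out v t ∧ y = Copy.inn v t'

open Relation

/-- Chain lemma for successor chains along a subset of ℕ. -/
lemma chain_aux_s9 {V : Type*} {E : Finset (V × V × ℕ × ℕ)}
    (T : Set ℕ) (mk : ℕ → Copy V)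
    (edge : ∀ t t', t ∈ T → t' ∈ T → t < t' → (∀ s ∈ T, s ≤ t ∨ t' ≤ s) →
      GEdge E (mk t) (mk t')) :
    ∀ d μ τ, μ ∈ T → τ ∈ T → μ ≤ τ → τ - μ ≤ d →
      ReflTransGen (GEdge E) (mk μ) (mk τ) := by
  intro d
  induction d with
  | zero =>
    intro μ τ hμ hτ hle hd
    have : μ = τ := by omega
    subst this; exact .refl
  | succ d ih =>
    intro μ τ hμ hτ hle hd
    rcases eq_or_lt_of_le hle with rfl | hlt
    · exact .refl
    · have hne : {s | s ∈ T ∧ μ < s}.Nonempty := ⟨τ, hτ, hlt⟩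
      have hmem := Nat.sInf_mem hne
      set t' := sInf {s | s ∈ T ∧ μ < s} with ht'
      have ht'T : t' ∈ T := hmem.1
      have hμt' : μ < t' := hmem.2
      have ht'τ : t' ≤ τ := Nat.sInf_le ⟨hτ, hlt⟩
      have hedge : GEdge E (mk μ) (mk t') := by
        apply edge _ _ hμ ht'T hμt'
        intro s hs
        by_cases h : s ≤ μ
        · exact Or.inl h
        · exact Or.inr (Nat.sInf_le ⟨hs, by omega⟩)
      exact ReflTransGen.head hedge (ih t' τ ht'T hτ ht'τ (by omega))

lemma chain_in {V : Type*} {E : Finset (V × V × ℕ × ℕ)} {v : V} {μ τ : ℕ}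
    (hμ : μ ∈ Tin E v) (hτ : τ ∈ Tin E v) (hle : μ ≤ τ) :
    ReflTransGen (GEdge E) (Copy.inn v μ) (Copy.inn v τ) :=
  chain_aux_s9 (Tin E v) (Copy.inn v) (fun _ _ h1 h2 h3 h4 => GEdge.in_in h1 h2 h3 h4)
    (τ - μ) μ τ hμ hτ hle le_rfl

lemma chain_out {V : Type*} {E : Finset (V × V × ℕ × ℕ)} {v : V} {μ τ : ℕ}
    (hμ : μ ∈ Tout E v) (hτ : τ ∈ Tout E v) (hle : μ ≤ τ) :
    ReflTransGen (GEdge E) (Copy.out v μ) (Copy.out v τ) :=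
  chain_aux_s9 (Tout E v) (Copy.out v) (fun _ _ h1 h2 h3 h4 => GEdge.out_out h1 h2 h3 h4)
    (τ - μ) μ τ hμ hτ hle le_rfl

/-- If `x` reaches `out(v,t)` in `G` and `x` is not a copy of `v`, then `x`
reaches some `in(v,μ)` with `μ ≤ t`. -/
lemma reach_out_to_in {V : Type*} {E : Finset (V × V × ℕ × ℕ)} :
    ∀ {x z : Copy V}, ReflTransGen (GEdge E) x z →
    ∀ v t, z = Copy.out v t → x.base ≠ v →
    ∃ μ, μ ∈ Tin E v ∧ μ ≤ t ∧ ReflTransGen (GEdge E) x (Copy.inn v μ) := by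
  intro x z h
  induction h with
  | refl =>
    intro v t hz hx
    subst hz
    simp [Copy.base] at hx
  | tail hw hedge ih =>
    intro v t hz hx
    subst hz
    cases hedge with
    | out_out h1 h2 h3 h4 =>
      obtain ⟨μ, hμ, hle, hp⟩ := ih v _ rfl hx
      exact ⟨μ, hμ, by omega, hp⟩
    | in_out h1 h2 h3 h4 h5 =>
      exact ⟨_, h1, h3, hw⟩

/-- Any `G_new` path is either a `G` path or ends by a pending new edge. -/
lemma main_aux {V : Type*} {E : Finset (V × V × ℕ × ℕ)} :
    ∀ {x y : Copy V}, ReflTransGen (GEdgeNew E) x y →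
    ReflTransGen (GEdge E) x y ∨
    ∃ v t τ, ReflTransGen (GEdge E) x (Copy.out v t) ∧ t ∈ Tout E v ∧
      τ ∈ Tin E v ∧ t < τ ∧ y = Copy.inn v τ := by
  intro x y h
  induction h with
  | refl => exact Or.inl .refl
  | tail hw hedge ih =>
    rcases ih with hG | ⟨v, t, τ, hp, htO, hτI, hlt, rfl⟩
    · rcases hedge with hE | ⟨v, t, τ, htO, hτI, hlt, rfl, rfl⟩
      · exact Or.inl (hG.tail hE)
      · exact Or.inr ⟨v, t, τ, hG, htO, hτI, hlt, rfl⟩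
    · rcases hedge with hE | ⟨v', t'', τ', _, _, _, heq, rfl⟩
      · cases hE with
        | in_in h1 h2 h3 h4 =>
          exact Or.inr ⟨v, t, _, hp, htO, h2, by omega, rfl⟩
        | in_out h1 h2 h3 h4 h5 =>
          exact Or.inl (hp.trans (chain_out htO h2 (by omega)))
      · simp at heq

theorem reach_in_G_iff_reach_in_Gnew {V : Type*} (E : Finset (V × V × ℕ × ℕ))
    (hl : ∀ u v t l, (u, v, t, l) ∈ E → 1 ≤ l)
    (a b : V) (hab : a ≠ b) (r s : Copy V)
    (hr : IsVert E r) (hs : IsVert E s) (hra : r.base = a) (hsb : s.base = b) :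
    Relation.ReflTransGen (GEdge E) r s ↔ Relation.ReflTransGen (GEdgeNew E) r s := by
  constructor
  · intro h
    exact ReflTransGen.mono (fun _ _ hxy => Or.inl hxy) _ _ h
  · intro h
    rcases main_aux h with hG | ⟨v, t, τ, hp, htO, hτI, hlt, rfl⟩
    · exact hG
    · simp [Copy.base] at hsb
      subst hsb
      have hxne : r.base ≠ v := by rw [hra]; exact hab
      obtain ⟨μ, hμ, hle, hpr⟩ := reach_out_to_in hp v t rfl hxne
      exact hpr.trans (chain_in hμ hτI (by omega))
end

section
/- Let G be the transformed graph of a temporal graph. For any a, b ∈ 𝒱, any t ∈ T_out(a) and any t' ∈ T_in(b): out(a, t) →_G in(b, t') if and only if there exists a temporal path P from a to b with start(P) ≥ t and end(P) ≤ t'. -/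
/-- Consecutive-edge condition for a temporal path: the head vertex of the next
edge is the tail vertex of the current one, and `t_i + λ_i ≤ t_{i+1}`. -/
def StepOK {V : Type*} (e f : V × V × ℕ × ℕ) : Prop :=
  e.2.1 = f.1 ∧ e.2.2.1 + e.2.2.2 ≤ f.2.2.1

/-- `P` is a temporal path from `a` to `b` in the temporal graph with
temporal edge set `E`. -/
def IsTempPath {V : Type*} (E : Finset (V × V × ℕ × ℕ)) (a b : V)
    (P : List (V × V × ℕ × ℕ)) : Prop :=
  P ≠ [] ∧ (∀ e ∈ P, e ∈ E) ∧ List.Chain' StepOK P ∧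
    (P.head?.map fun e => e.1) = some a ∧ (P.getLast?.map fun e => e.2.1) = some b

/-- The starting time `start(P)` of a (nonempty) temporal path. -/
def startT {V : Type*} (P : List (V × V × ℕ × ℕ)) : ℕ :=
  (P.head?.map fun e => e.2.2.1).getD 0

/-- The ending time `end(P)` of a (nonempty) temporal path. -/
def endT {V : Type*} (P : List (V × V × ℕ × ℕ)) : ℕ :=
  (P.getLast?.map fun e => e.2.2.1 + e.2.2.2).getD 0

/-- The duration `dura(P) = end(P) - start(P)` of a temporal path. -/
def duraT {V : Type*} (P : List (V × V × ℕ × ℕ)) : ℕ := endT P - startT P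

section Aux
variable {V : Type*} {E : Finset (V × V × ℕ × ℕ)}

lemma reach_mono_out (v : V) : ∀ n t s, s - t = n → t ∈ Tout E v → s ∈ Tout E v →
    t ≤ s → Relation.ReflTransGen (GEdge E) (.out v t) (.out v s) := by
  intro n
  induction n using Nat.strong_induction_on with
  | _ n ih =>
    intro t s hn ht hs hts
    rcases eq_or_lt_of_le hts with rfl | hlt
    · exact .refl
    · have hA : s ∈ {x | x ∈ Tout E v ∧ t < x} := ⟨hs, hlt⟩
      have h2 := Nat.sInf_mem ⟨s, hA⟩
      have ht2s : sInf {x | x ∈ Tout E v ∧ t < x} ≤ s := Nat.sInf_le hA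
      have edge : GEdge E (.out v t) (.out v (sInf {x | x ∈ Tout E v ∧ t < x})) := by
        refine .out_out ht h2.1 h2.2 (fun s' hs' => ?_)
        rcases le_or_gt s' t with h | h
        · exact Or.inl h
        · exact Or.inr (Nat.sInf_le ⟨hs', h⟩)
      subst hn
      exact Relation.ReflTransGen.head edge
        (ih _ (by have := h2.2; omega) _ s rfl h2.1 hs ht2s)

lemma reach_mono_in (v : V) : ∀ n t s, s - t = n → t ∈ Tin E v → s ∈ Tin E v →
    t ≤ s → Relation.ReflTransGen (GEdge E) (.inn v t) (.inn v s) := by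
  intro n
  induction n using Nat.strong_induction_on with
  | _ n ih =>
    intro t s hn ht hs hts
    rcases eq_or_lt_of_le hts with rfl | hlt
    · exact .refl
    · have hA : s ∈ {x | x ∈ Tin E v ∧ t < x} := ⟨hs, hlt⟩
      have h2 := Nat.sInf_mem ⟨s, hA⟩
      have ht2s : sInf {x | x ∈ Tin E v ∧ t < x} ≤ s := Nat.sInf_le hA
      have edge : GEdge E (.inn v t) (.inn v (sInf {x | x ∈ Tin E v ∧ t < x})) := by
        refine .in_in ht h2.1 h2.2 (fun s' hs' => ?_)
        rcases le_or_gt s' t with h | h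
        · exact Or.inl h
        · exact Or.inr (Nat.sInf_le ⟨hs', h⟩)
      subst hn
      exact Relation.ReflTransGen.head edge
        (ih _ (by have := h2.2; omega) _ s rfl h2.1 hs ht2s)

lemma reach_in_out (v : V) {t s : ℕ} (ht : t ∈ Tin E v) (hs : s ∈ Tout E v)
    (h : t ≤ s) : Relation.ReflTransGen (GEdge E) (.inn v t) (.out v s) := by
  set A := {x | x ∈ Tout E v ∧ t ≤ x} with hAdef
  have hsA : s ∈ A := ⟨hs, h⟩
  have hs0 := Nat.sInf_mem ⟨s, hsA⟩
  set s₀ := sInf A with hs0def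
  set B := {x | x ∈ Tin E v ∧ x ≤ s₀} with hBdef
  have htB : t ∈ B := ⟨ht, hs0.2⟩
  have hBbdd : BddAbove B := ⟨s₀, fun x hx => hx.2⟩
  have ht0 := Nat.sSup_mem ⟨t, htB⟩ hBbdd
  set t₀ := sSup B with ht0def
  have htt0 : t ≤ t₀ := le_csSup hBbdd htB
  have edge : GEdge E (.inn v t₀) (.out v s₀) := by
    refine .in_out ht0.1 hs0.1 ht0.2 (fun s' hs' hle => ?_)
      (fun u h1 h2 => le_csSup hBbdd ⟨h1, h2⟩)
    exact Nat.sInf_le ⟨hs', le_trans htt0 hle⟩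
  exact ((reach_mono_in v _ t t₀ rfl ht ht0.1 htt0).trans
    (Relation.ReflTransGen.single edge)).trans
    (reach_mono_out v _ s₀ s rfl hs0.1 hs (Nat.sInf_le hsA))

lemma temp_path_cons {u v b : V} {t0 l : ℕ} {P : List (V × V × ℕ × ℕ)}
    (hE : (u, v, t0, l) ∈ E) (hP : IsTempPath E v b P) (hle : t0 + l ≤ startT P) :
    IsTempPath E u b ((u, v, t0, l) :: P) := by
  obtain ⟨hne, hmem, hch, hhd, hlast⟩ := hP
  obtain ⟨f, rest, rfl⟩ := List.exists_cons_of_ne_nil hne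
  refine ⟨by simp, ?_, ?_, by simp, ?_⟩
  · intro e he
    rcases List.mem_cons.1 he with rfl | he
    · exact hE
    · exact hmem e he
  · refine List.isChain_cons_cons.2 ⟨?_, hch⟩
    simp only [List.head?_cons, Option.map_some] at hhd
    refine ⟨by simpa using hhd.symm, ?_⟩
    simpa [startT] using hle
  · rw [List.getLast?_cons_cons]
    exact hlast

lemma startT_cons (e : V × V × ℕ × ℕ) (P : List (V × V × ℕ × ℕ)) :
    startT (e :: P) = e.2.2.1 := by simp [startT]

lemma endT_cons_cons (e f : V × V × ℕ × ℕ) (P : List (V × V × ℕ × ℕ)) :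
    endT (e :: f :: P) = endT (f :: P) := by
  simp [endT, List.getLast?_cons_cons]

lemma endT_cons_of_ne_nil (e : V × V × ℕ × ℕ) {P : List (V × V × ℕ × ℕ)}
    (h : P ≠ []) : endT (e :: P) = endT P := by
  obtain ⟨f, rest, rfl⟩ := List.exists_cons_of_ne_nil h
  exact endT_cons_cons e f rest

lemma backward {b : V} {t' : ℕ} (ht' : t' ∈ Tin E b) :
    ∀ (P : List (V × V × ℕ × ℕ)) (a : V) (t : ℕ), t ∈ Tout E a →
      IsTempPath E a b P → t ≤ startT P → endT P ≤ t' →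
      Relation.ReflTransGen (GEdge E) (.out a t) (.inn b t') := by
  intro P
  induction P with
  | nil => intro a t _ hP _ _; exact absurd rfl hP.1
  | cons e rest ih =>
    intro a t ht hP hstart hend
    obtain ⟨hne, hmem, hch, hhd, hlast⟩ := hP
    obtain ⟨u, v, t0, l⟩ := e
    have hu : u = a := by simpa using hhd
    subst hu
    have heE : (u, v, t0, l) ∈ E := hmem _ List.mem_cons_self
    have ht0 : t0 ∈ Tout E u := ⟨v, l, heE⟩
    have htin : t0 + l ∈ Tin E v := ⟨u, t0, l, heE, rfl⟩
    have hstart' : t ≤ t0 := by simpa [startT_cons] using hstart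
    have step1 : Relation.ReflTransGen (GEdge E) (.out u t) (.out u t0) :=
      reach_mono_out u _ t t0 rfl ht ht0 hstart'
    have step2 : GEdge E (.out u t0) (.inn v (t0 + l)) := .cross heE
    cases rest with
    | nil =>
      have hv : v = b := by simpa using hlast
      subst hv
      have hend' : t0 + l ≤ t' := by simpa [endT] using hend
      exact (step1.tail step2).trans (reach_mono_in v _ _ t' rfl htin ht' hend')
    | cons f rest' =>
      have hstep : StepOK (u, v, t0, l) f := (List.isChain_cons_cons.1 hch).1
      have hfE : f ∈ E := hmem _ (by simp)
      have hfout : f.2.2.1 ∈ Tout E v := by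
        refine ⟨f.2.1, f.2.2.2, ?_⟩
        have : f = (v, f.2.1, f.2.2.1, f.2.2.2) := by
          obtain ⟨f1, f2, f3, f4⟩ := f
          simp only [StepOK] at hstep
          simp [← hstep.1]
        rwa [← this]
      have hpath' : IsTempPath E v b (f :: rest') := by
        refine ⟨by simp, fun e he => hmem e (by simp [he]), (List.isChain_cons_cons.1 hch).2, ?_, ?_⟩
        · simp [hstep.1.symm]
        · rw [← List.getLast?_cons_cons (b := f)]; exact hlast
      have step3 : Relation.ReflTransGen (GEdge E) (.inn v (t0 + l)) (.out v f.2.2.1) :=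
        reach_in_out v htin hfout hstep.2
      have hend' : endT (f :: rest') ≤ t' := by
        rwa [endT_cons_cons] at hend
      exact ((step1.tail step2).trans step3).trans
        (ih v f.2.2.1 hfout hpath' (by simp [startT_cons]) hend')

lemma forward {b : V} {t' : ℕ} {x : Copy V}
    (h : Relation.ReflTransGen (GEdge E) x (.inn b t')) :
    (match x with
      | .inn v s => (v = b ∧ s ≤ t') ∨
          ∃ P, IsTempPath E v b P ∧ s ≤ startT P ∧ endT P ≤ t'
      | .out v s => ∃ P, IsTempPath E v b P ∧ s ≤ startT P ∧ endT P ≤ t') := by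
  induction h using Relation.ReflTransGen.head_induction_on with
  | refl => exact Or.inl ⟨rfl, le_refl _⟩
  | head e _ IH =>
    cases e with
    | in_in h1 h2 h3 _ =>
      rcases IH with ⟨rfl, hle⟩ | ⟨P, hP, h5, h6⟩
      · exact Or.inl ⟨rfl, le_of_lt (lt_of_lt_of_le h3 hle)⟩
      · exact Or.inr ⟨P, hP, le_trans (le_of_lt h3) h5, h6⟩
    | out_out h1 h2 h3 _ =>
      obtain ⟨P, hP, h5, h6⟩ := IH
      exact ⟨P, hP, le_trans (le_of_lt h3) h5, h6⟩
    | in_out h1 h2 h3 _ _ =>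
      obtain ⟨P, hP, h5, h6⟩ := IH
      exact Or.inr ⟨P, hP, le_trans h3 h5, h6⟩
    | @cross u v t0 l hE =>
      rcases IH with ⟨rfl, hle⟩ | ⟨P, hP, h5, h6⟩
      · refine ⟨[(u, v, t0, l)], ⟨by simp, by simpa using hE, List.isChain_singleton _, by simp, by simp⟩,
          ?_, ?_⟩
        · simp [startT]
        · simpa [endT] using hle
      · exact ⟨(u, v, t0, l) :: P, temp_path_cons hE hP h5, by simp [startT_cons],
          by rw [endT_cons_of_ne_nil _ hP.1]; exact h6⟩

end Aux

theorem reach_out_in_iff_temporal_path {V : Type*} (E : Finset (V × V × ℕ × ℕ))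
    (a b : V) (t t' : ℕ) (ht : t ∈ Tout E a) (ht' : t' ∈ Tin E b) :
    Relation.ReflTransGen (GEdge E) (.out a t) (.inn b t') ↔
      ∃ P, IsTempPath E a b P ∧ t ≤ startT P ∧ endT P ≤ t' := by
  constructor
  · intro h
    exact forward h
  · rintro ⟨P, hP, h1, h2⟩
    exact backward ht' P a t ht hP h1 h2
end

section
/- Let G be the transformed graph of a temporal graph, let a, b ∈ 𝒱, and let t_α ≤ t_ω be natural numbers. Then P(a, b, [t_α, t_ω]) ≠ ∅ if and only if the sets {t ∈ T_out(a) : t ≥ t_α} and {t' ∈ T_in(b) : t' ≤ t_ω} are both nonempty and, letting t_o = min{t ∈ T_out(a) : t ≥ t_α} and t_i = max{t' ∈ T_in(b) : t' ≤ t_ω}, we have out(a, t_o) →_G in(b, t_i). -/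
open Relation in
private lemma chain_out' {V : Type*} (E : Finset (V × V × ℕ × ℕ)) (v : V) :
    ∀ n t t', t' - t = n → t ∈ Tout E v → t' ∈ Tout E v → t ≤ t' →
      ReflTransGen (GEdge E) (.out v t) (.out v t') := by
  intro n
  induction n using Nat.strong_induction_on with
  | _ n ih =>
    intro t t' hn ht ht' hle
    rcases eq_or_lt_of_le hle with rfl | hlt
    · exact ReflTransGen.refl
    classical
    have hex : ∃ s, s ∈ Tout E v ∧ t < s := ⟨t', ht', hlt⟩
    have hm : Nat.find hex ∈ Tout E v ∧ t < Nat.find hex := Nat.find_spec hex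
    have hmin : ∀ s, s ∈ Tout E v → t < s → Nat.find hex ≤ s :=
      fun s hs hts => Nat.find_min' hex ⟨hs, hts⟩
    have hmle : Nat.find hex ≤ t' := hmin t' ht' hlt
    have hedge : GEdge E (.out v t) (.out v (Nat.find hex)) :=
      GEdge.out_out ht hm.1 hm.2 (fun s hs => by
        rcases le_or_gt s t with h | h
        · exact Or.inl h
        · exact Or.inr (hmin s hs h))
    have hlt' : t' - Nat.find hex < n := by omega
    exact ReflTransGen.head hedge (ih _ hlt' _ t' rfl hm.1 ht' hmle)

open Relation in
private lemma chain_out_s12 {V : Type*} (E : Finset (V × V × ℕ × ℕ)) (v : V) {t t' : ℕ}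
    (ht : t ∈ Tout E v) (ht' : t' ∈ Tout E v) (hle : t ≤ t') :
    ReflTransGen (GEdge E) (.out v t) (.out v t') :=
  chain_out' E v _ t t' rfl ht ht' hle

open Relation in
private lemma chain_in' {V : Type*} (E : Finset (V × V × ℕ × ℕ)) (v : V) :
    ∀ n t t', t' - t = n → t ∈ Tin E v → t' ∈ Tin E v → t ≤ t' →
      ReflTransGen (GEdge E) (.inn v t) (.inn v t') := by
  intro n
  induction n using Nat.strong_induction_on with
  | _ n ih =>
    intro t t' hn ht ht' hle
    rcases eq_or_lt_of_le hle with rfl | hlt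
    · exact ReflTransGen.refl
    classical
    have hex : ∃ s, s ∈ Tin E v ∧ t < s := ⟨t', ht', hlt⟩
    have hm : Nat.find hex ∈ Tin E v ∧ t < Nat.find hex := Nat.find_spec hex
    have hmin : ∀ s, s ∈ Tin E v → t < s → Nat.find hex ≤ s :=
      fun s hs hts => Nat.find_min' hex ⟨hs, hts⟩
    have hmle : Nat.find hex ≤ t' := hmin t' ht' hlt
    have hedge : GEdge E (.inn v t) (.inn v (Nat.find hex)) :=
      GEdge.in_in ht hm.1 hm.2 (fun s hs => by
        rcases le_or_gt s t with h | h
        · exact Or.inl h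
        · exact Or.inr (hmin s hs h))
    have hlt' : t' - Nat.find hex < n := by omega
    exact ReflTransGen.head hedge (ih _ hlt' _ t' rfl hm.1 ht' hmle)

open Relation in
private lemma chain_in_s12 {V : Type*} (E : Finset (V × V × ℕ × ℕ)) (v : V) {t t' : ℕ}
    (ht : t ∈ Tin E v) (ht' : t' ∈ Tin E v) (hle : t ≤ t') :
    ReflTransGen (GEdge E) (.inn v t) (.inn v t') :=
  chain_in' E v _ t t' rfl ht ht' hle

open Relation in
private lemma inn_to_out {V : Type*} (E : Finset (V × V × ℕ × ℕ)) (v : V) {t s : ℕ}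
    (ht : t ∈ Tin E v) (hs : s ∈ Tout E v) (hts : t ≤ s) :
    ReflTransGen (GEdge E) (.inn v t) (.out v s) := by
  classical
  set tm := Nat.findGreatest (· ∈ Tin E v) s with htm
  have htm_mem : tm ∈ Tin E v := Nat.findGreatest_spec hts ht
  have htm_le : tm ≤ s := Nat.findGreatest_le s
  have h_t_tm : t ≤ tm := Nat.le_findGreatest hts ht
  have hex : ∃ s', s' ∈ Tout E v ∧ tm ≤ s' := ⟨s, hs, htm_le⟩
  have hsm : Nat.find hex ∈ Tout E v ∧ tm ≤ Nat.find hex := Nat.find_spec hex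
  have hsmin : ∀ s', s' ∈ Tout E v → tm ≤ s' → Nat.find hex ≤ s' :=
    fun s' h1 h2 => Nat.find_min' hex ⟨h1, h2⟩
  have hsms : Nat.find hex ≤ s := hsmin s hs htm_le
  have hedge : GEdge E (.inn v tm) (.out v (Nat.find hex)) :=
    GEdge.in_out htm_mem hsm.1 hsm.2 (fun s' h1 h2 => hsmin s' h1 h2)
      (fun t' ht' hle => Nat.le_findGreatest (le_trans hle hsms) ht')
  exact (chain_in_s12 E v ht htm_mem h_t_tm).trans
    (ReflTransGen.head hedge (chain_out_s12 E v hsm.1 hs hsms))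

open Relation in
private lemma path_walk {V : Type*} (E : Finset (V × V × ℕ × ℕ)) :
    ∀ (P : List (V × V × ℕ × ℕ)) (u b : V), IsTempPath E u b P →
      ReflTransGen (GEdge E) (.out u (startT P)) (.inn b (endT P)) := by
  intro P
  induction P with
  | nil => intro u b h; exact absurd rfl h.1
  | cons e rest ih =>
    intro u b h
    obtain ⟨hne, hmem, hchain, hhead, hlast⟩ := h
    obtain ⟨u', v, t, l⟩ := e
    have hu : u' = u := by simpa using hhead
    subst hu
    cases rest with
    | nil =>
      have hb : v = b := by simpa using hlast
      subst hb
      have hE : (u', v, t, l) ∈ E := hmem _ (by simp)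
      simpa [startT, endT] using ReflTransGen.single (GEdge.cross hE)
    | cons f rest' =>
      have hstep : StepOK (u', v, t, l) f := (List.isChain_cons_cons.mp hchain).1
      obtain ⟨hfv, hfl⟩ := hstep
      have hE : (u', v, t, l) ∈ E := hmem _ (by simp)
      have hpath : IsTempPath E f.1 b (f :: rest') := by
        refine ⟨by simp, fun e he => hmem _ (List.mem_cons_of_mem _ he),
          (List.isChain_cons_cons.mp hchain).2, by simp, ?_⟩
        rw [← hlast, List.getLast?_cons_cons]
      have hwalk := ih f.1 b hpath
      have htin : t + l ∈ Tin E v := ⟨u', t, l, hE, rfl⟩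
      have htout : f.2.2.1 ∈ Tout E f.1 := by
        obtain ⟨f1, f2, ft, fl⟩ := f
        exact ⟨f2, fl, hmem _ (by simp)⟩
      have h1 : ReflTransGen (GEdge E) (.inn v (t + l)) (.out f.1 f.2.2.1) := by
        rw [← hfv] at htout ⊢
        exact inn_to_out E v htin htout (by simpa using hfl)
      have hstart : startT (f :: rest') = f.2.2.1 := rfl
      have hend : endT ((u', v, t, l) :: f :: rest') = endT (f :: rest') := by
        simp [endT, List.getLast?_cons_cons]
      rw [hend]
      exact (ReflTransGen.head (GEdge.cross hE) h1).trans (hstart ▸ hwalk)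

/-- The invariant used in the backward direction. -/
private def Reach {V : Type*} (E : Finset (V × V × ℕ × ℕ)) (b : V) (t1 : ℕ) :
    Copy V → Prop
  | .out u s => ∃ P, IsTempPath E u b P ∧ s ≤ startT P ∧ endT P ≤ t1
  | .inn u t => (u = b ∧ t ≤ t1) ∨ ∃ P, IsTempPath E u b P ∧ t ≤ startT P ∧ endT P ≤ t1

open Relation in
private lemma reach_of_walk {V : Type*} (E : Finset (V × V × ℕ × ℕ)) (b : V) (t1 : ℕ)
    {x : Copy V} (h : ReflTransGen (GEdge E) x (.inn b t1)) : Reach E b t1 x := by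
  induction h using Relation.ReflTransGen.head_induction_on with
  | refl => exact Or.inl ⟨rfl, le_refl _⟩
  | head hedge _ ih =>
    cases hedge with
    | in_in h1 h2 hlt _ =>
      rcases ih with ⟨rfl, h⟩ | ⟨P, hP, h1', h2'⟩
      · exact Or.inl ⟨rfl, le_of_lt (lt_of_lt_of_le hlt h)⟩
      · exact Or.inr ⟨P, hP, le_trans (le_of_lt hlt) h1', h2'⟩
    | out_out h1 h2 hlt _ =>
      obtain ⟨P, hP, h1', h2'⟩ := ih
      exact ⟨P, hP, le_trans (le_of_lt hlt) h1', h2'⟩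
    | in_out h1 h2 hle _ _ =>
      obtain ⟨P, hP, h1', h2'⟩ := ih
      exact Or.inr ⟨P, hP, le_trans hle h1', h2'⟩
    | @cross u v t l hmem =>
      rcases ih with ⟨rfl, hle⟩ | ⟨P, hP, h1', h2'⟩
      · exact ⟨[(u, v, t, l)], ⟨by simp, by simp [hmem], List.isChain_singleton _, by simp, by simp⟩,
          le_refl _, by simpa [endT] using hle⟩
      · obtain ⟨hne, hmemP, hchain, hhead, hlast⟩ := hP
        cases P with
        | nil => exact absurd rfl hne
        | cons f rest =>
          have hfv : f.1 = v := by simpa using hhead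
          refine ⟨(u, v, t, l) :: f :: rest,
            ⟨by simp, ?_, List.isChain_cons_cons.mpr ⟨⟨hfv.symm, by simpa [startT] using h1'⟩, hchain⟩,
             by simp, by rw [← hlast, List.getLast?_cons_cons]⟩,
            le_refl _, ?_⟩
          · intro e he
            rcases List.mem_cons.mp he with rfl | he
            · exact hmem
            · exact hmemP _ he
          · simpa [endT, List.getLast?_cons_cons] using h2'

theorem temporal_reachability_iff {V : Type*} (E : Finset (V × V × ℕ × ℕ))
    (a b : V) (ta tw : ℕ) (htatw : ta ≤ tw) :
    (∃ P, IsTempPath E a b P ∧ ta ≤ startT P ∧ endT P ≤ tw) ↔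
      ∃ t0 t1,
        (t0 ∈ Tout E a ∧ ta ≤ t0 ∧ ∀ t ∈ Tout E a, ta ≤ t → t0 ≤ t) ∧
        (t1 ∈ Tin E b ∧ t1 ≤ tw ∧ ∀ t' ∈ Tin E b, t' ≤ tw → t' ≤ t1) ∧
        Relation.ReflTransGen (GEdge E) (.out a t0) (.inn b t1) := by
  classical
  constructor
  · rintro ⟨P, hP, hstart, hend⟩
    have hPcopy := hP
    obtain ⟨hne, hmem, hchain, hhead, hlast⟩ := hPcopy
    -- startT P ∈ Tout E a
    have hsout : startT P ∈ Tout E a := by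
      cases P with
      | nil => exact absurd rfl hne
      | cons e rest =>
        obtain ⟨u, v, t, l⟩ := e
        have hu : u = a := by simpa using hhead
        have hst : startT ((u, v, t, l) :: rest) = t := rfl
        rw [hst]
        exact ⟨v, l, hu ▸ hmem _ (by simp)⟩
    have hein : endT P ∈ Tin E b := by
      rcases List.eq_nil_or_concat P with rfl | ⟨L, e, rfl⟩
      · exact absurd rfl hne
      · obtain ⟨u, v, t, l⟩ := e
        rw [List.concat_eq_append] at *
        have hv : v = b := by
          have h := hlast
          rw [List.getLast?_concat] at h
          simpa using h
        have heq : endT (L ++ [(u, v, t, l)]) = t + l := by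
          simp [endT, List.getLast?_concat]
        rw [heq]
        exact ⟨u, t, l, hv ▸ hmem _ (by simp), rfl⟩
    have hex0 : ∃ t, t ∈ Tout E a ∧ ta ≤ t := ⟨startT P, hsout, hstart⟩
    refine ⟨Nat.find hex0, Nat.findGreatest (· ∈ Tin E b) tw,
      ⟨(Nat.find_spec hex0).1, (Nat.find_spec hex0).2,
        fun t ht hta => Nat.find_min' hex0 ⟨ht, hta⟩⟩,
      ⟨Nat.findGreatest_spec hend hein, Nat.findGreatest_le tw,
        fun t' ht' hle => Nat.le_findGreatest hle ht'⟩, ?_⟩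
    have h1 : Relation.ReflTransGen (GEdge E) (.out a (Nat.find hex0)) (.out a (startT P)) :=
      chain_out_s12 E a (Nat.find_spec hex0).1 hsout (Nat.find_min' hex0 ⟨hsout, hstart⟩)
    have h2 := path_walk E P a b hP
    have h3 : Relation.ReflTransGen (GEdge E) (.inn b (endT P))
        (.inn b (Nat.findGreatest (· ∈ Tin E b) tw)) :=
      chain_in_s12 E b hein (Nat.findGreatest_spec hend hein) (Nat.le_findGreatest hend hein)
    exact (h1.trans h2).trans h3
  · rintro ⟨t0, t1, ⟨ht0, hta, _⟩, ⟨ht1, htw, _⟩, hreach⟩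
    obtain ⟨P, hP, h1, h2⟩ := reach_of_walk E b t1 hreach
    exact ⟨P, hP, le_trans hta h1, le_trans h2 htw⟩
end

section
/- Let G = (V, E) be the transformed graph of a temporal graph with temporal edge set 𝒠. Then the number of vertices of G satisfies |V| ≤ 2·|𝒠| and the number of edges of G satisfies |E| ≤ 4·|𝒠|. -/
open Classical in
/-- A witness temporal edge for an arrival time. -/
noncomputable def innWit {V : Type*} (E : Finset (V × V × ℕ × ℕ)) (v : V) (t : ℕ) :
    Option (V × V × ℕ × ℕ) :=
  if h : t ∈ Tin E v then
    some (h.choose, v, h.choose_spec.choose, h.choose_spec.choose_spec.choose)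
  else none

lemma innWit_spec {V : Type*} (E : Finset (V × V × ℕ × ℕ)) {v : V} {t : ℕ}
    (h : t ∈ Tin E v) :
    ∃ e, innWit E v t = some e ∧ e ∈ E ∧ e.2.1 = v ∧ e.2.2.1 + e.2.2.2 = t := by
  unfold innWit
  rw [dif_pos h]
  exact ⟨_, rfl, h.choose_spec.choose_spec.choose_spec.1, rfl,
    h.choose_spec.choose_spec.choose_spec.2.symm⟩

open Classical in
/-- A witness temporal edge for a starting time. -/
noncomputable def outWit {V : Type*} (E : Finset (V × V × ℕ × ℕ)) (v : V) (t : ℕ) :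
    Option (V × V × ℕ × ℕ) :=
  if h : t ∈ Tout E v then
    some (v, h.choose, t, h.choose_spec.choose)
  else none

lemma outWit_spec {V : Type*} (E : Finset (V × V × ℕ × ℕ)) {v : V} {t : ℕ}
    (h : t ∈ Tout E v) :
    ∃ e, outWit E v t = some e ∧ e ∈ E ∧ e.1 = v ∧ e.2.2.1 = t := by
  unfold outWit
  rw [dif_pos h]
  exact ⟨_, rfl, h.choose_spec.choose_spec, rfl, rfl⟩

/-- Vertex encoding map. -/
noncomputable def vEnc {V : Type*} (E : Finset (V × V × ℕ × ℕ)) :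
    Copy V → Option ((V × V × ℕ × ℕ) × Bool)
  | .inn v t => (innWit E v t).map (fun e => (e, true))
  | .out v t => (outWit E v t).map (fun e => (e, false))

/-- Edge encoding map. -/
noncomputable def eEnc {V : Type*} (E : Finset (V × V × ℕ × ℕ)) :
    Copy V × Copy V → Option ((V × V × ℕ × ℕ) × Fin 4)
  | (.inn _ _, .inn v' t') => (innWit E v' t').map (fun e => (e, 0))
  | (.out v t, .out _ _) => (outWit E v t).map (fun e => (e, 1))
  | (.inn _ _, .out v' s) => (outWit E v' s).map (fun e => (e, 2))
  | (.out u t, .inn v s) => some ((u, v, t, s - t), 3)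

theorem transformed_graph_size {V : Type*} (E : Finset (V × V × ℕ × ℕ)) :
    {x : Copy V | IsVert E x}.ncard ≤ 2 * E.card ∧
    {p : Copy V × Copy V | GEdge E p.1 p.2}.ncard ≤ 4 * E.card := by
  constructor
  · -- vertex bound
    have key : {x : Copy V | IsVert E x}.ncard ≤
        (Option.some '' (↑(E ×ˢ (Finset.univ : Finset Bool)) :
          Set ((V × V × ℕ × ℕ) × Bool))).ncard := by
      apply Set.ncard_le_ncard_of_injOn (vEnc E)
      · rintro (⟨v, t⟩ | ⟨v, t⟩) hx
        · obtain ⟨e, heq, heE, -, -⟩ := innWit_spec E hx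
          exact ⟨(e, true), by simp [Finset.mem_product, heE], by simp [vEnc, heq]⟩
        · obtain ⟨e, heq, heE, -, -⟩ := outWit_spec E hx
          exact ⟨(e, false), by simp [Finset.mem_product, heE], by simp [vEnc, heq]⟩
      · rintro (⟨v, t⟩ | ⟨v, t⟩) hx (⟨v', t'⟩ | ⟨v', t'⟩) hy hxy
        · obtain ⟨e, heq, -, hev, het⟩ := innWit_spec E hx
          obtain ⟨e', heq', -, hev', het'⟩ := innWit_spec E hy
          simp only [vEnc, heq, heq', Option.map_some, Option.some.injEq,
            Prod.mk.injEq] at hxy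
          obtain ⟨rfl, -⟩ := hxy
          rw [← hev, hev', ← het, het']
        · obtain ⟨e, heq, -, -, -⟩ := innWit_spec E hx
          obtain ⟨e', heq', -, -, -⟩ := outWit_spec E hy
          simp [vEnc, heq, heq'] at hxy
        · obtain ⟨e, heq, -, -, -⟩ := outWit_spec E hx
          obtain ⟨e', heq', -, -, -⟩ := innWit_spec E hy
          simp [vEnc, heq, heq'] at hxy
        · obtain ⟨e, heq, -, hev, het⟩ := outWit_spec E hx
          obtain ⟨e', heq', -, hev', het'⟩ := outWit_spec E hy
          simp only [vEnc, heq, heq', Option.map_some, Option.some.injEq,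
            Prod.mk.injEq] at hxy
          obtain ⟨rfl, -⟩ := hxy
          rw [← hev, hev', ← het, het']
    refine key.trans_eq ?_
    rw [Set.ncard_image_of_injective _ (Option.some_injective _), Set.ncard_coe_finset,
      Finset.card_product, Finset.card_univ, Fintype.card_bool, mul_comm]
  · -- edge bound
    have key : {p : Copy V × Copy V | GEdge E p.1 p.2}.ncard ≤
        (Option.some '' (↑(E ×ˢ (Finset.univ : Finset (Fin 4))) :
          Set ((V × V × ℕ × ℕ) × Fin 4))).ncard := by
      apply Set.ncard_le_ncard_of_injOn (eEnc E)
      · rintro ⟨a, b⟩ hp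
        cases hp with
        | in_in h1 h2 hlt hc =>
            obtain ⟨e, heq, heE, -, -⟩ := innWit_spec E h2
            exact ⟨(e, 0), by simp [Finset.mem_product, heE], by simp [eEnc, heq]⟩
        | out_out h1 h2 hlt hc =>
            obtain ⟨e, heq, heE, -, -⟩ := outWit_spec E h1
            exact ⟨(e, 1), by simp [Finset.mem_product, heE], by simp [eEnc, heq]⟩
        | in_out h1 h2 hle hc1 hc2 =>
            obtain ⟨e, heq, heE, -, -⟩ := outWit_spec E h2
            exact ⟨(e, 2), by simp [Finset.mem_product, heE], by simp [eEnc, heq]⟩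
        | @cross u v t l hE =>
            exact ⟨((u, v, t, l), 3), by simp [Finset.mem_product, hE],
              by simp [eEnc]⟩
      · rintro ⟨a, b⟩ hp ⟨c, d⟩ hq hpq
        simp only [Set.mem_setOf_eq] at hp hq
        cases hp with
        | @in_in v t t' h1 h2 hlt hc =>
          cases hq with
          | @in_in w s s' g1 g2 glt gc =>
              obtain ⟨e, heq, -, hev, het⟩ := innWit_spec E h2
              obtain ⟨e', heq', -, hev', het'⟩ := innWit_spec E g2
              simp only [eEnc, heq, heq', Option.map_some, Option.some.injEq,
                Prod.mk.injEq] at hpq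
              obtain ⟨rfl, -⟩ := hpq
              have hv : v = w := hev.symm.trans hev'
              have ht' : t' = s' := het.symm.trans het'
              subst hv; subst ht'
              have h1' := gc t h1
              have h2' := hc s g1
              have : t = s := by omega
              subst this; rfl
          | out_out g1 g2 glt gc =>
              obtain ⟨e, heq, -, -, -⟩ := innWit_spec E h2
              obtain ⟨e', heq', -, -, -⟩ := outWit_spec E g1
              simp [eEnc, heq, heq'] at hpq
          | in_out g1 g2 gle gc1 gc2 =>
              obtain ⟨e, heq, -, -, -⟩ := innWit_spec E h2
              obtain ⟨e', heq', -, -, -⟩ := outWit_spec E g2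
              simp [eEnc, heq, heq', Fin.ext_iff] at hpq
          | cross gE =>
              obtain ⟨e, heq, -, -, -⟩ := innWit_spec E h2
              simp only [eEnc, heq, Option.map_some, Option.some.injEq,
                Prod.mk.injEq] at hpq
              exact absurd hpq.2 (by decide)
        | @out_out v t t' h1 h2 hlt hc =>
          cases hq with
          | in_in g1 g2 glt gc =>
              obtain ⟨e, heq, -, -, -⟩ := outWit_spec E h1
              obtain ⟨e', heq', -, -, -⟩ := innWit_spec E g2
              simp [eEnc, heq, heq'] at hpq
          | @out_out w s s' g1 g2 glt gc =>
              obtain ⟨e, heq, -, hev, het⟩ := outWit_spec E h1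
              obtain ⟨e', heq', -, hev', het'⟩ := outWit_spec E g1
              simp only [eEnc, heq, heq', Option.map_some, Option.some.injEq,
                Prod.mk.injEq] at hpq
              obtain ⟨rfl, -⟩ := hpq
              have hv : v = w := hev.symm.trans hev'
              have ht : t = s := het.symm.trans het'
              subst hv; subst ht
              have h1' := gc t' h2
              have h2' := hc s' g2
              have : t' = s' := by omega
              subst this; rfl
          | in_out g1 g2 gle gc1 gc2 =>
              obtain ⟨e, heq, -, -, -⟩ := outWit_spec E h1
              obtain ⟨e', heq', -, -, -⟩ := outWit_spec E g2
              simp [eEnc, heq, heq', Fin.ext_iff] at hpq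
          | cross gE =>
              obtain ⟨e, heq, -, -, -⟩ := outWit_spec E h1
              simp only [eEnc, heq, Option.map_some, Option.some.injEq,
                Prod.mk.injEq] at hpq
              exact absurd hpq.2 (by decide)
        | @in_out v t s h1 h2 hle hc1 hc2 =>
          cases hq with
          | in_in g1 g2 glt gc =>
              obtain ⟨e, heq, -, -, -⟩ := outWit_spec E h2
              obtain ⟨e', heq', -, -, -⟩ := innWit_spec E g2
              simp [eEnc, heq, heq', Fin.ext_iff] at hpq
          | out_out g1 g2 glt gc =>
              obtain ⟨e, heq, -, -, -⟩ := outWit_spec E h2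
              obtain ⟨e', heq', -, -, -⟩ := outWit_spec E g1
              simp [eEnc, heq, heq', Fin.ext_iff] at hpq
          | @in_out w t₂ s₂ g1 g2 gle gc1 gc2 =>
              obtain ⟨e, heq, -, hev, het⟩ := outWit_spec E h2
              obtain ⟨e', heq', -, hev', het'⟩ := outWit_spec E g2
              simp only [eEnc, heq, heq', Option.map_some, Option.some.injEq,
                Prod.mk.injEq] at hpq
              obtain ⟨rfl, -⟩ := hpq
              have hv : v = w := hev.symm.trans hev'
              have hs : s = s₂ := het.symm.trans het'
              subst hv; subst hs
              have h1' := gc2 t h1 hle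
              have h2' := hc2 t₂ g1 gle
              have : t = t₂ := le_antisymm h1' h2'
              subst this; rfl
          | cross gE =>
              obtain ⟨e, heq, -, -, -⟩ := outWit_spec E h2
              simp only [eEnc, heq, Option.map_some, Option.some.injEq,
                Prod.mk.injEq] at hpq
              exact absurd hpq.2 (by decide)
        | @cross u v t l hE =>
          cases hq with
          | in_in g1 g2 glt gc =>
              obtain ⟨e', heq', -, -, -⟩ := innWit_spec E g2
              simp only [eEnc, heq', Option.map_some, Option.some.injEq,
                Prod.mk.injEq] at hpq
              exact absurd hpq.2 (by decide)
          | out_out g1 g2 glt gc =>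
              obtain ⟨e', heq', -, -, -⟩ := outWit_spec E g1
              simp only [eEnc, heq', Option.map_some, Option.some.injEq,
                Prod.mk.injEq] at hpq
              exact absurd hpq.2 (by decide)
          | in_out g1 g2 gle gc1 gc2 =>
              obtain ⟨e', heq', -, -, -⟩ := outWit_spec E g2
              simp only [eEnc, heq', Option.map_some, Option.some.injEq,
                Prod.mk.injEq] at hpq
              exact absurd hpq.2 (by decide)
          | @cross u₂ v₂ t₂ l₂ gE =>
              simp only [eEnc, Option.some.injEq, Prod.mk.injEq,
                Nat.add_sub_cancel_left] at hpq
              obtain ⟨⟨rfl, rfl, rfl, rfl⟩, -⟩ := hpq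
              rfl
    refine key.trans_eq ?_
    rw [Set.ncard_image_of_injective _ (Option.some_injective _), Set.ncard_coe_finset,
      Finset.card_product, Finset.card_univ, Fintype.card_fin, mul_comm]
end

section
/- Let G be the transformed graph of a temporal graph in which every temporal edge (u, v, t, λ) has u ≠ v (no self-loops). Then for any a ∈ 𝒱, any t ∈ T_out(a) and any t' ∈ T_in(a): out(a, t) →_G in(a, t') if and only if there exists a temporal edge (a, c, s, λ) ∈ 𝒠 with s ≥ t (so necessarily c ≠ a) such that in(c, s + λ) →_G in(a, t'). -/
private lemma out_chain {V : Type*} (E : Finset (V × V × ℕ × ℕ)) (a : V) :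
    ∀ n t s, s - t = n → t ∈ Tout E a → s ∈ Tout E a → t ≤ s →
      Relation.ReflTransGen (GEdge E) (.out a t) (.out a s) := by
  intro n
  induction n using Nat.strong_induction_on with
  | _ n ih =>
    intro t s hn ht hs hts
    rcases eq_or_lt_of_le hts with rfl | hlt
    · exact .refl
    · have hSne : {x | x ∈ Tout E a ∧ t < x}.Nonempty := ⟨s, hs, hlt⟩
      set m := sInf {x | x ∈ Tout E a ∧ t < x} with hm
      have hmS : m ∈ {x | x ∈ Tout E a ∧ t < x} := Nat.sInf_mem hSne
      have hms : m ≤ s := Nat.sInf_le ⟨hs, hlt⟩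
      have hedge : GEdge E (.out a t) (.out a m) :=
        GEdge.out_out ht hmS.1 hmS.2 (fun x hx => by
          rcases le_or_gt x t with h | h
          · exact Or.inl h
          · exact Or.inr (Nat.sInf_le ⟨hx, h⟩))
      have htm : t < m := hmS.2
      have hlt2 : s - m < n := by omega
      exact Relation.ReflTransGen.head hedge (ih _ hlt2 m s rfl hmS.1 hs hms)

theorem reach_out_in_same_vertex_iff {V : Type*} (E : Finset (V × V × ℕ × ℕ))
    (hns : ∀ u v t l, (u, v, t, l) ∈ E → u ≠ v)
    (a : V) (t t' : ℕ) (ht : t ∈ Tout E a) (ht' : t' ∈ Tin E a) :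
    Relation.ReflTransGen (GEdge E) (.out a t) (.inn a t') ↔
      ∃ c s l, (a, c, s, l) ∈ E ∧ t ≤ s ∧
        Relation.ReflTransGen (GEdge E) (.inn c (s + l)) (.inn a t') := by
  constructor
  · intro h
    suffices H : ∀ x, Relation.ReflTransGen (GEdge E) x (.inn a t') →
        ∀ t'', x = .out a t'' →
          ∃ c s l, (a, c, s, l) ∈ E ∧ t'' ≤ s ∧
            Relation.ReflTransGen (GEdge E) (.inn c (s + l)) (.inn a t') by
      exact H _ h t rfl
    intro x hx
    induction hx using Relation.ReflTransGen.head_induction_on with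
    | refl => intro t'' h; cases h
    | head hedge htail ih =>
      intro t'' hx
      subst hx
      cases hedge with
      | out_out h1 h2 h3 h4 =>
        obtain ⟨c, s, l, e1, e2, e3⟩ := ih _ rfl
        exact ⟨c, s, l, e1, le_trans (le_of_lt h3) e2, e3⟩
      | cross he => exact ⟨_, _, _, he, le_refl _, htail⟩
  · rintro ⟨c, s, l, he, hts, hpath⟩
    have hs : s ∈ Tout E a := ⟨c, l, he⟩
    exact ((out_chain E a _ t s rfl ht hs hts).tail (GEdge.cross he)).trans hpath
end
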